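/- Let I be a finite index set and, for each i ∈ I, let u_i = (a_i, b_i) and v_i = (c_i, d_i) be points of ℝ² with a_i ≤ b_i and c_i ≤ d_i. Let β₁(t) = Σ_{i∈I} χ_{[a_i,b_i)}(t) and β₂(t) = Σ_{i∈I} χ_{[c_i,d_i)}(t) be the corresponding unweighted Betti functions. Fix an equally spaced grid t₁ < t₂ < ⋯ < t_d with Δt = t_{k+1} − t_k constant, and let 𝛃₁, 𝛃₂ ∈ ℝ^{d−1} be the vectors of averaged Bettis with k-th components (1/Δt)∫_{t_k}^{t_{k+1}} β₁(t) dt and (1/Δt)∫_{t_k}^{t_{k+1}} β₂(t) dt. Then ‖𝛃₁ − 𝛃₂‖₁ ≤ (1/Δt) · Σ_{i∈I} (|a_i − c_i| + |b_i − d_i|). -/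

import Mathlib

open MeasureTheory

/-- The indicator function of the half-open interval `[a, b)`. -/
noncomputable def chiIco (a b t : ℝ) : ℝ :=
  Set.indicator (Set.Ico a b) (fun _ => (1 : ℝ)) t

lemma integrable_chiIco (a b : ℝ) : Integrable (chiIco a b) := by
  unfold chiIco
  rw [integrable_indicator_iff measurableSet_Ico]
  exact (integrableOn_const measure_Ico_lt_top.ne)

lemma chiIco_nonneg (a b t : ℝ) : 0 ≤ chiIco a b t := by
  unfold chiIco; exact Set.indicator_nonneg (fun _ _ => zero_le_one) t

lemma chiIco_of_mem {a b t : ℝ} (h : t ∈ Set.Ico a b) : chiIco a b t = 1 :=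
  Set.indicator_of_mem h _

lemma chiIco_of_not_mem {a b t : ℝ} (h : t ∉ Set.Ico a b) : chiIco a b t = 0 :=
  Set.indicator_of_notMem h _

lemma integral_chiIco (a b : ℝ) (h : a ≤ b) : ∫ t, chiIco a b t = b - a := by
  unfold chiIco
  rw [MeasureTheory.integral_indicator_const (1:ℝ) measurableSet_Ico]
  simp [Real.volume_Ico, ENNReal.toReal_ofReal (sub_nonneg.2 h), h]

lemma abs_sub_chiIco_le (a b c d : ℝ) (t : ℝ) :
    |chiIco a b t - chiIco c d t| ≤
      chiIco (min a c) (max a c) t + chiIco (min b d) (max b d) t := by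
  have n1 := chiIco_nonneg (min a c) (max a c) t
  have n2 := chiIco_nonneg (min b d) (max b d) t
  by_cases h1 : t ∈ Set.Ico a b <;> by_cases h2 : t ∈ Set.Ico c d
  · rw [chiIco_of_mem h1, chiIco_of_mem h2]; simp; linarith
  · rw [chiIco_of_mem h1, chiIco_of_not_mem h2]
    rw [Set.mem_Ico, not_and_or, not_le, not_lt] at h2
    obtain ⟨ha, hb⟩ := h1
    rcases h2 with h | h
    · have hm : t ∈ Set.Ico (min a c) (max a c) :=
        ⟨le_trans (min_le_left _ _) ha, lt_of_lt_of_le h (le_max_right _ _)⟩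
      rw [chiIco_of_mem hm]; rw [abs_of_nonneg (by norm_num)]; linarith
    · have hm : t ∈ Set.Ico (min b d) (max b d) :=
        ⟨le_trans (min_le_right _ _) h, lt_of_lt_of_le hb (le_max_left _ _)⟩
      rw [chiIco_of_mem hm]; rw [abs_of_nonneg (by norm_num)]; linarith
  · rw [chiIco_of_mem h2, chiIco_of_not_mem h1]
    rw [Set.mem_Ico, not_and_or, not_le, not_lt] at h1
    obtain ⟨hc, hd⟩ := h2
    rcases h1 with h | h
    · have hm : t ∈ Set.Ico (min a c) (max a c) :=
        ⟨le_trans (min_le_right _ _) hc, lt_of_lt_of_le h (le_max_left _ _)⟩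
      rw [chiIco_of_mem hm]; rw [abs_of_nonpos (by norm_num)]; simp; linarith
    · have hm : t ∈ Set.Ico (min b d) (max b d) :=
        ⟨le_trans (min_le_left _ _) h, lt_of_lt_of_le hd (le_max_right _ _)⟩
      rw [chiIco_of_mem hm]; rw [abs_of_nonpos (by norm_num)]; simp; linarith
  · rw [chiIco_of_not_mem h1, chiIco_of_not_mem h2]; simp; linarith

/-- **Stability of the vector of averaged Bettis, unweighted case (Corollary 1 with
`w ≡ 1`).** Given a matching `i ↦ ((aᵢ, bᵢ), (cᵢ, dᵢ))` between two persistence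
diagrams with `aᵢ ≤ bᵢ` and `cᵢ ≤ dᵢ`, form the unweighted Betti functions
`β₁(t) = Σᵢ χ_{[aᵢ,bᵢ)}(t)` and `β₂(t) = Σᵢ χ_{[cᵢ,dᵢ)}(t)`. For an equally spaced
grid `T 0 < T 1 < ⋯ < T (n-1)` with spacing `Δt > 0`, the vectors of averaged Bettis,
with `k`-th components `(1/Δt)·∫_{T k}^{T (k+1)} βⱼ(t) dt` for `k = 0, …, n-2`, satisfy
`‖𝛃₁ − 𝛃₂‖₁ ≤ (1/Δt)·Σᵢ (|aᵢ − cᵢ| + |bᵢ − dᵢ|)`. -/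
theorem vab_stability_unweighted
    (ι : Type*) [Fintype ι]
    (a b c d : ι → ℝ)
    (hab : ∀ i, a i ≤ b i) (hcd : ∀ i, c i ≤ d i)
    (n : ℕ) (hn : 2 ≤ n) (T : ℕ → ℝ) (Δt : ℝ) (hΔt : 0 < Δt)
    (hT : ∀ k, T (k + 1) = T k + Δt) :
    ∑ k ∈ Finset.range (n - 1),
        |(1 / Δt) * (∫ t in T k..T (k + 1), ∑ i, chiIco (a i) (b i) t)
          - (1 / Δt) * ∫ t in T k..T (k + 1), ∑ i, chiIco (c i) (d i) t|
      ≤ (1 / Δt) * ∑ i, (|a i - c i| + |b i - d i|) := by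
  set g : ι → ℝ → ℝ := fun i t =>
    chiIco (min (a i) (c i)) (max (a i) (c i)) t
      + chiIco (min (b i) (d i)) (max (b i) (d i)) t with hg
  have hgint : ∀ i, Integrable (g i) := fun i =>
    (integrable_chiIco _ _).add (integrable_chiIco _ _)
  have hgnn : ∀ i t, 0 ≤ g i t := fun i t =>
    add_nonneg (chiIco_nonneg _ _ _) (chiIco_nonneg _ _ _)
  have hTle : ∀ k, T k ≤ T (k + 1) := fun k => by rw [hT]; linarith
  have hΔinv : (0:ℝ) ≤ 1 / Δt := by positivity
  -- Step 1: per-k bound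
  have step1 : ∀ k,
      |(1 / Δt) * (∫ t in T k..T (k + 1), ∑ i, chiIco (a i) (b i) t)
          - (1 / Δt) * ∫ t in T k..T (k + 1), ∑ i, chiIco (c i) (d i) t|
        ≤ (1 / Δt) * ∑ i, ∫ t in T k..T (k + 1), g i t := by
    intro k
    rw [← mul_sub, abs_mul, abs_of_nonneg hΔinv]
    apply mul_le_mul_of_nonneg_left _ hΔinv
    have hi1 : IntervalIntegrable (fun t => ∑ i, chiIco (a i) (b i) t) volume (T k) (T (k+1)) :=
      (integrable_finset_sum _ (fun i _ => integrable_chiIco _ _)).intervalIntegrable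
    have hi2 : IntervalIntegrable (fun t => ∑ i, chiIco (c i) (d i) t) volume (T k) (T (k+1)) :=
      (integrable_finset_sum _ (fun i _ => integrable_chiIco _ _)).intervalIntegrable
    have heq : (∫ t in T k..T (k + 1), ∑ i, chiIco (a i) (b i) t)
        - ∫ t in T k..T (k + 1), ∑ i, chiIco (c i) (d i) t
        = ∫ t in T k..T (k + 1), ∑ i, (chiIco (a i) (b i) t - chiIco (c i) (d i) t) := by
      rw [← intervalIntegral.integral_sub hi1 hi2]
      congr 1; funext t; rw [← Finset.sum_sub_distrib]
    rw [heq]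
    have habs : |∫ t in T k..T (k + 1), ∑ i, (chiIco (a i) (b i) t - chiIco (c i) (d i) t)|
        ≤ ∫ t in T k..T (k + 1), |∑ i, (chiIco (a i) (b i) t - chiIco (c i) (d i) t)| :=
      intervalIntegral.abs_integral_le_integral_abs (hTle k)
    refine habs.trans ?_
    have hmono : (∫ t in T k..T (k + 1), |∑ i, (chiIco (a i) (b i) t - chiIco (c i) (d i) t)|)
        ≤ ∫ t in T k..T (k + 1), ∑ i, g i t := by
      apply intervalIntegral.integral_mono_on (hTle k)
      · exact ((integrable_finset_sum _ (fun i _ =>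
          (integrable_chiIco _ _).sub (integrable_chiIco _ _))).abs).intervalIntegrable
      · exact (integrable_finset_sum _ (fun i _ => hgint i)).intervalIntegrable
      · intro t _
        refine (Finset.abs_sum_le_sum_abs _ _).trans (Finset.sum_le_sum fun i _ => ?_)
        exact abs_sub_chiIco_le _ _ _ _ t
    exact hmono.trans (le_of_eq (intervalIntegral.integral_finset_sum (fun i _ => (hgint i).intervalIntegrable)))
  -- Step 2: sum over k
  refine (Finset.sum_le_sum fun k _ => step1 k).trans ?_
  rw [← Finset.mul_sum]
  apply mul_le_mul_of_nonneg_left _ hΔinv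
  rw [Finset.sum_comm]
  apply Finset.sum_le_sum
  intro i _
  have hadj : ∑ k ∈ Finset.range (n - 1), ∫ t in T k..T (k + 1), g i t
      = ∫ t in (T 0)..(T (n - 1)), g i t :=
    intervalIntegral.sum_integral_adjacent_intervals
      (fun k _ => (hgint i).intervalIntegrable)
  rw [hadj]
  have h0n : T 0 ≤ T (n - 1) := by
    have : ∀ m, T 0 ≤ T m := by
      intro m; induction m with
      | zero => exact le_refl _
      | succ m ih => rw [hT]; linarith
    exact this _
  have hle : (∫ t in (T 0)..(T (n - 1)), g i t) ≤ ∫ t, g i t := by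
    rw [intervalIntegral.integral_of_le h0n]
    exact setIntegral_le_integral (hgint i) (Filter.Eventually.of_forall fun t => hgnn i t)
  refine hle.trans ?_
  rw [hg]
  rw [integral_add (integrable_chiIco _ _) (integrable_chiIco _ _),
    integral_chiIco _ _ (min_le_max), integral_chiIco _ _ (min_le_max)]
  rw [max_sub_min_eq_abs, max_sub_min_eq_abs, abs_sub_comm (c i), abs_sub_comm (d i)]
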